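/- If X is an infinite subset of ω and the linear order ≤_L has no infinite descending chain contained in X, then ≤_L has an infinite ascending sequence contained in X. -/
import Mathlib


/-- If X is an infinite subset of ω and the linear order ≤_L has no infinite
descending chain contained in X, then ≤_L has an infinite ascending sequence
contained in X. -/
theorem no_descending_chain_gives_ascending_sequence (L : LinearOrder ℕ)
    (X : Set ℕ) (hX : X.Infinite)
    (h : ¬ ∃ S ⊆ X, S.Infinite ∧ ∀ x ∈ S, {y ∈ S | L.le x y}.Finite) :
    ∃ S ⊆ X, S.Infinite ∧ ∀ x ∈ S, ∀ y ∈ S, x ≤ y → L.le x y := by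
  push_neg at h
  have key : ∀ A : {A : Set ℕ // A ⊆ X ∧ A.Infinite},
      ∃ x : ℕ, x ∈ A.1 ∧ {y ∈ A.1 | L.le x y ∧ x < y}.Infinite := by
    rintro ⟨A, hAX, hAinf⟩
    obtain ⟨x, hxA, hxinf⟩ := h A hAX hAinf
    refine ⟨x, hxA, ?_⟩
    have := Set.Infinite.diff hxinf (Set.finite_Iic x)
    refine this.mono ?_
    rintro y ⟨⟨hyA, hle⟩, hnot⟩
    exact ⟨hyA, hle, Nat.lt_of_not_le fun hy => hnot hy⟩
  choose f hf1 hf2 using key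
  let g : ℕ → {A : Set ℕ // A ⊆ X ∧ A.Infinite} := fun n =>
    Nat.rec ⟨X, Set.Subset.rfl, hX⟩
      (fun _ A => ⟨{y ∈ A.1 | L.le (f A) y ∧ f A < y},
        fun y hy => A.2.1 hy.1, hf2 A⟩) n
  set x : ℕ → ℕ := fun n => f (g n) with hx
  have hstep : ∀ n, (g (n + 1)).1 = {y ∈ (g n).1 | L.le (x n) y ∧ x n < y} := fun n => rfl
  have hsub : ∀ m n, m ≤ n → (g n).1 ⊆ (g m).1 := by
    intro m n hmn
    induction n, hmn using Nat.le_induction with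
    | base => exact Set.Subset.rfl
    | succ n hmn ih =>
      refine Set.Subset.trans ?_ ih
      rw [hstep n]
      exact fun y hy => hy.1
  have hmem : ∀ m n, m < n → x n ∈ (g (m + 1)).1 := by
    intro m n hmn
    exact hsub (m + 1) n hmn (hf1 (g n))
  have hasc : ∀ m n, m < n → L.le (x m) (x n) ∧ x m < x n := by
    intro m n hmn
    have := hmem m n hmn
    rw [hstep m] at this
    exact ⟨this.2.1, this.2.2⟩
  have hinj : Function.Injective x := by
    intro a b hab
    rcases Nat.lt_trichotomy a b with h' | h' | h'
    · exact absurd hab (Nat.ne_of_lt (hasc a b h').2)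
    · exact h'
    · exact absurd hab.symm (Nat.ne_of_lt (hasc b a h').2)
  refine ⟨Set.range x, ?_, ?_, ?_⟩
  · rintro _ ⟨n, rfl⟩
    exact (g n).2.1 (hf1 (g n))
  · exact Set.infinite_range_of_injective hinj
  · rintro _ ⟨m, rfl⟩ _ ⟨n, rfl⟩ hle
    rcases Nat.lt_trichotomy m n with hmn | rfl | hnm
    · exact (hasc m n hmn).1
    · exact L.le_refl _
    · exact absurd hle (Nat.not_le_of_lt (hasc n m hnm).2)
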